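/- Suppose $v_1=(1,0), v_2,\dots,v_{n-2}=(0,-1)$ are lattice vectors in $\mathbb{Z}^2$ such that each consecutive pair forms a $\mathbb{Z}$-basis, written $v_i=(x_i,y_i)$, and integers $a_2,\dots,a_{n-3}$ satisfy $a_i v_i = v_{i-1}+v_{i+1}$ with $x_i> 0$ for $2\le i\le n-3$. If $a_i\ge 2$ for all $2\le i\le n-3$, then the sequence $x_1\le x_2\le\cdots\le x_{n-3}$ is nondecreasing, contradicting $x_{n-2}=0$; hence $n\le 4$. -/

import Mathlib

/-- Suppose `v 1 = (1,0), v 2, …, v (n-2) = (0,-1)` are lattice vectors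
in `ℤ²` such that each consecutive pair forms a `ℤ`-basis, with `x i := (v i).1 > 0` for
`2 ≤ i ≤ n-3`, and integers `a i` satisfy `a i • v i = v (i-1) + v (i+1)` for
`2 ≤ i ≤ n-3`.  If `a i ≥ 2` for all `2 ≤ i ≤ n-3`, then the first coordinates are
nondecreasing (for `5 ≤ n`), contradicting `(v (n-2)).1 = 0`; hence `n ≤ 4`. -/
theorem stmt_1 (n : ℕ) (v : ℕ → ℤ × ℤ) (a : ℕ → ℤ)
    (hv1 : v 1 = (1, 0)) (hvn2 : v (n - 2) = (0, -1))
    (hbasis : ∀ i, 1 ≤ i → i ≤ n - 3 →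
      (v i).1 * (v (i + 1)).2 - (v i).2 * (v (i + 1)).1 = -1)
    (hx : ∀ i, 2 ≤ i → i ≤ n - 3 → 0 < (v i).1)
    (hrec : ∀ i, 2 ≤ i → i ≤ n - 3 → a i • v i = v (i - 1) + v (i + 1))
    (ha : ∀ i, 2 ≤ i → i ≤ n - 3 → 2 ≤ a i) :
    (5 ≤ n → ∀ i, 1 ≤ i → i ≤ n - 3 → (v i).1 ≤ (v (i + 1)).1) ∧ n ≤ 4 := by
  have mono : 5 ≤ n → ∀ i, 1 ≤ i → i ≤ n - 3 → (v i).1 ≤ (v (i + 1)).1 := by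
    intro hn i hi1
    induction i, hi1 using Nat.le_induction with
    | base =>
      intro hle
      have h2 : 0 < (v 2).1 := hx 2 le_rfl (by omega)
      rw [hv1]; simp; omega
    | succ i hi ih =>
      intro hle
      have ihx : (v i).1 ≤ (v (i + 1)).1 := ih (by omega)
      have hr := hrec (i + 1) (by omega) hle
      have hr1 : a (i + 1) * (v (i + 1)).1 = (v i).1 + (v (i + 2)).1 := by
        have := congrArg Prod.fst hr
        simpa using this
      have hax : 2 ≤ a (i + 1) := ha (i + 1) (by omega) hle
      have hxp : 0 < (v (i + 1)).1 := hx (i + 1) (by omega) hle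
      nlinarith [hr1, hax, hxp, ihx]
  refine ⟨mono, ?_⟩
  by_contra hlt
  push_neg at hlt
  have hn : 5 ≤ n := by omega
  have h1 : (v (n - 3)).1 ≤ (v (n - 3 + 1)).1 := mono hn (n - 3) (by omega) le_rfl
  have heq : n - 3 + 1 = n - 2 := by omega
  rw [heq, hvn2] at h1
  have hxp : 0 < (v (n - 3)).1 := hx (n - 3) (by omega) le_rfl
  simp at h1
  omega
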